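/- arXiv:1407.5572 — 2 statements merged into one kernel-verified Lean document; each statement's English description precedes it below -/
import Mathlib

section
/- Let 0 ≤ a ≤ a₂ ≤ 1 and, for odd k ≥ 3, define S_k = (a₂^{k-1} - a^{k-1})/(a₂² - a²) when a₂ ≠ a (interpreted as the polynomial ∑_{j=0}^{s-1} a₂^{2j} a^{2(s-1-j)} with k-1 = 2s). If a² + a₂² ≤ 1, then the sequence S_{k} over odd k ≥ 5 satisfies S_{k+2} ≤ S_k, i.e. it is decreasing. -/
/-- The symmetric polynomial `S_k = ∑_{j=0}^{s-1} a₂^{2j} a^{2(s-1-j)}`, indexed by `s`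
where `k - 1 = 2s` (so odd `k ≥ 3` corresponds to `s ≥ 1`, and `S_1 = 0`). -/
def Ssum (a a₂ : ℝ) (s : ℕ) : ℝ :=
  ∑ j ∈ Finset.range s, a₂ ^ (2 * j) * a ^ (2 * (s - 1 - j))

lemma Ssum_succ (a a₂ : ℝ) (s : ℕ) (hs : 1 ≤ s) :
    Ssum a a₂ (s + 1) = a ^ 2 * Ssum a a₂ s + a₂ ^ (2 * s) := by
  unfold Ssum
  rw [Finset.sum_range_succ, Finset.mul_sum]
  congr 1
  · apply Finset.sum_congr rfl
    intro j hj
    rw [Finset.mem_range] at hj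
    have h1 : s + 1 - 1 - j = (s - 1 - j) + 1 := by omega
    rw [h1, mul_add, pow_add]
    ring
  · simp

lemma Ssum_ge (a a₂ : ℝ) (ha : 0 ≤ a) (hle : a ≤ a₂) (s : ℕ) (hs : 1 ≤ s) :
    a₂ ^ (2 * (s - 1)) ≤ Ssum a a₂ s := by
  have ha₂ : 0 ≤ a₂ := le_trans ha hle
  unfold Ssum
  have := Finset.single_le_sum (f := fun j => a₂ ^ (2 * j) * a ^ (2 * (s - 1 - j)))
    (fun j _ => by positivity) (Finset.mem_range.mpr (by omega : s - 1 < s))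
  simpa [Nat.sub_self] using this

/-- If `0 ≤ a ≤ a₂ ≤ 1` and `a² + a₂² ≤ 1`, then the sequence `S_k` over odd `k ≥ 5`
(i.e. `s ≥ 2`) is decreasing: `S_{k+2} ≤ S_k`. -/
theorem Ssum_decreasing (a a₂ : ℝ) (ha : 0 ≤ a) (hle : a ≤ a₂) (ha₂ : a₂ ≤ 1)
    (hsq : a ^ 2 + a₂ ^ 2 ≤ 1) :
    ∀ s : ℕ, 2 ≤ s → Ssum a a₂ (s + 1) ≤ Ssum a a₂ s := by
  intro s hs
  have ha₂0 : 0 ≤ a₂ := le_trans ha hle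
  rw [Ssum_succ a a₂ s (by omega)]
  have h1 : a₂ ^ (2 * s) = a₂ ^ 2 * a₂ ^ (2 * (s - 1)) := by
    rw [← pow_add]
    congr 1
    omega
  have h2 : a₂ ^ (2 * (s - 1)) ≤ Ssum a a₂ s := Ssum_ge a a₂ ha hle s (by omega)
  have h3 : a₂ ^ (2 * s) ≤ (1 - a ^ 2) * Ssum a a₂ s := by
    rw [h1]
    have : a₂ ^ 2 ≤ 1 - a ^ 2 := by linarith
    apply mul_le_mul this h2 (by positivity) (by nlinarith [sq_nonneg a₂])
  nlinarith
end

section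
/- Let 0 ≤ a ≤ a₂ ≤ 1, 0 ≤ e ≤ 1 with max{a, a₂²} ≤ 1 - e ≤ a₂, and define for odd k ≥ 3: T_k = (1-e)(1 - S_{k+2}) + a₂² a² S_k and V_k = e a₂² a² S_{k-2}, where S_k = ∑_{j=0}^{s-1} a₂^{2j} a^{2(s-1-j)} with k-1 = 2s (and S_1 = 0). Then T_k ≥ V_k ≥ 0 for all odd k ≥ 3. -/
lemma Ssum_nonneg (a a₂ : ℝ) (s : ℕ) : 0 ≤ Ssum a a₂ s := by
  apply Finset.sum_nonneg
  intro j _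
  rw [pow_mul, pow_mul]
  exact mul_nonneg (pow_nonneg (sq_nonneg a₂) _) (pow_nonneg (sq_nonneg a) _)

lemma Ssum_succ_left (a a₂ : ℝ) (s : ℕ) :
    Ssum a a₂ (s + 1) = a ^ (2 * s) + a₂ ^ 2 * Ssum a a₂ s := by
  unfold Ssum
  rw [Finset.sum_range_succ', Finset.mul_sum]
  have h0 : a₂ ^ (2 * 0) * a ^ (2 * (s + 1 - 1 - 0)) = a ^ (2 * s) := by
    norm_num
  rw [h0, add_comm]
  congr 1
  apply Finset.sum_congr rfl
  intro j hj
  have h1 : s + 1 - 1 - (j + 1) = s - 1 - j := by omega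
  rw [h1, show 2 * (j + 1) = 2 * j + 2 by ring, pow_add]
  ring

lemma Ssum_succ_right (a a₂ : ℝ) (s : ℕ) :
    Ssum a a₂ (s + 1) = a₂ ^ (2 * s) + a ^ 2 * Ssum a a₂ s := by
  unfold Ssum
  rw [Finset.sum_range_succ, Finset.mul_sum]
  have h0 : a₂ ^ (2 * s) * a ^ (2 * (s + 1 - 1 - s)) = a₂ ^ (2 * s) := by
    norm_num
  rw [h0, add_comm]
  congr 1
  apply Finset.sum_congr rfl
  intro j hj
  have hjs : j < s := Finset.mem_range.mp hj
  have h1 : s + 1 - 1 - j = (s - 1 - j) + 1 := by omega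
  rw [h1, show 2 * ((s - 1 - j) + 1) = 2 * (s - 1 - j) + 2 by ring, pow_add]
  ring

lemma P_nonneg (a a₂ b : ℝ) (ha0 : 0 ≤ a) (hle : a ≤ a₂) (ha₂ : a₂ ≤ 1)
    (hb2 : a₂ ^ 2 ≤ b) (hb1 : b ≤ 1) :
    ∀ t : ℕ, 0 ≤ b * (1 - a ^ (2 * (t + 1))) - a₂ ^ (2 * (t + 1)) * (b - a ^ 2)
      - a₂ ^ 2 * a ^ 2 * (1 - a ^ 2) * Ssum a a₂ t := by
  have ha1 : a ≤ 1 := le_trans hle ha₂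
  have ha₂0 : 0 ≤ a₂ := le_trans ha0 hle
  have haa : a ^ 2 ≤ a₂ ^ 2 := by nlinarith
  have ha2le1 : a ^ 2 ≤ 1 := by nlinarith
  intro t
  induction t with
  | zero =>
    simp only [Ssum, Finset.range_zero, Finset.sum_empty, mul_zero, sub_zero]
    norm_num
    nlinarith [mul_nonneg (sub_nonneg.2 hb2) (sub_nonneg.2 ha2le1),
      mul_nonneg (sq_nonneg a₂) (sub_nonneg.2 hb1)]
  | succ t IH =>
    have hz0 : (0:ℝ) ≤ a₂ ^ (2 * t) := by positivity
    have hz1 : a₂ ^ (2 * t) ≤ 1 := pow_le_one₀ ha₂0 ha₂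
    have hx0 : (0:ℝ) ≤ a ^ (2 * (t + 1)) := by positivity
    have hx1 : a ^ (2 * (t + 1)) ≤ 1 := pow_le_one₀ ha0 ha1
    have hpy : a₂ ^ (2 * (t + 1)) = a₂ ^ (2 * t) * a₂ ^ 2 := by
      rw [show 2 * (t + 1) = 2 * t + 2 by ring, pow_add]
    have hpyy : a₂ ^ (2 * (t + 1 + 1)) = a₂ ^ (2 * t) * a₂ ^ 2 * a₂ ^ 2 := by
      rw [show 2 * (t + 1 + 1) = 2 * t + 2 + 2 by ring, pow_add, pow_add]
    have hpxx : a ^ (2 * (t + 1 + 1)) = a ^ (2 * (t + 1)) * a ^ 2 := by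
      rw [show 2 * (t + 1 + 1) = 2 * (t + 1) + 2 by ring, pow_add]
    rw [hpy] at IH
    rw [Ssum_succ_right, hpyy, hpxx]
    set z := a₂ ^ (2 * t) with hz
    set x := a ^ (2 * (t + 1)) with hxd
    set S := Ssum a a₂ t with hS
    have hSn : 0 ≤ S := Ssum_nonneg a a₂ t
    -- remainder nonnegativity
    have hbr0 : 0 ≤ (b - a ^ 2) * (a₂ ^ 2 - a ^ 2) + a ^ 2 * (1 - a ^ 2) := by nlinarith
    have hbr1 : (b - a ^ 2) * (a₂ ^ 2 - a ^ 2) + a ^ 2 * (1 - a ^ 2) ≤ (1 - a ^ 2) * a₂ ^ 2 := by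
      nlinarith [mul_nonneg (sub_nonneg.2 haa) (sub_nonneg.2 hb1)]
    have h5 : z * a₂ ^ 2 * ((b - a ^ 2) * (a₂ ^ 2 - a ^ 2) + a ^ 2 * (1 - a ^ 2))
        ≤ a₂ ^ 2 * ((1 - a ^ 2) * a₂ ^ 2) := by
      have hza : z * a₂ ^ 2 ≤ a₂ ^ 2 := by nlinarith [sq_nonneg a₂]
      calc z * a₂ ^ 2 * ((b - a ^ 2) * (a₂ ^ 2 - a ^ 2) + a ^ 2 * (1 - a ^ 2))
          ≤ a₂ ^ 2 * ((b - a ^ 2) * (a₂ ^ 2 - a ^ 2) + a ^ 2 * (1 - a ^ 2)) := by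
            exact mul_le_mul_of_nonneg_right hza hbr0
        _ ≤ a₂ ^ 2 * ((1 - a ^ 2) * a₂ ^ 2) := by
            exact mul_le_mul_of_nonneg_left hbr1 (sq_nonneg a₂)
    have h6 : a₂ ^ 2 * ((1 - a ^ 2) * a₂ ^ 2) ≤ b * (1 - a ^ 2) := by
      nlinarith [mul_nonneg (sub_nonneg.2 hb2) (sub_nonneg.2 ha2le1),
        mul_nonneg (mul_nonneg (sq_nonneg a₂) (sub_nonneg.2 (by nlinarith : a₂ ^ 2 ≤ 1)))
          (sub_nonneg.2 ha2le1)]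
    have hrem : 0 ≤ b * (1 - a ^ 2)
        - z * a₂ ^ 2 * ((b - a ^ 2) * (a₂ ^ 2 - a ^ 2) + a ^ 2 * (1 - a ^ 2)) := by
      linarith
    nlinarith [mul_nonneg (sq_nonneg a) IH, hrem]

/-- With `0 ≤ a ≤ a₂ ≤ 1`, `0 ≤ e ≤ 1`, `max{a, a₂²} ≤ 1 - e ≤ a₂`, and for odd `k ≥ 3`
(i.e. `s ≥ 1`) `T_k = (1-e)(1 - S_{k+2}) + a₂² a² S_k`, `V_k = e a₂² a² S_{k-2}`
(with `S_1 = 0`), one has `T_k ≥ V_k ≥ 0`. -/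
theorem T_ge_V_ge_zero (a a₂ e : ℝ) (ha0 : 0 ≤ a) (hle : a ≤ a₂) (ha₂ : a₂ ≤ 1)
    (he0 : 0 ≤ e) (he1 : e ≤ 1)
    (hmax : max a (a₂ ^ 2) ≤ 1 - e) (heb : 1 - e ≤ a₂) :
    ∀ s : ℕ, 1 ≤ s →
      0 ≤ e * a₂ ^ 2 * a ^ 2 * Ssum a a₂ (s - 1) ∧
      e * a₂ ^ 2 * a ^ 2 * Ssum a a₂ (s - 1) ≤
        (1 - e) * (1 - Ssum a a₂ (s + 1)) + a₂ ^ 2 * a ^ 2 * Ssum a a₂ s := by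
  have hb2 : a₂ ^ 2 ≤ 1 - e := le_trans (le_max_right _ _) hmax
  have hb1 : 1 - e ≤ 1 := by linarith
  intro s hs
  obtain ⟨t, rfl⟩ : ∃ t, s = t + 1 := ⟨s - 1, by omega⟩
  have hst : t + 1 - 1 = t := by omega
  rw [hst]
  constructor
  · exact mul_nonneg (mul_nonneg (mul_nonneg he0 (sq_nonneg a₂)) (sq_nonneg a))
      (Ssum_nonneg a a₂ t)
  · have hP := P_nonneg a a₂ (1 - e) ha0 hle ha₂ hb2 hb1 t
    have h1 : Ssum a a₂ (t + 1 + 1) = a ^ (2 * (t + 1)) + a₂ ^ 2 * Ssum a a₂ (t + 1) :=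
      Ssum_succ_left a a₂ (t + 1)
    have h2 : Ssum a a₂ (t + 1) = a₂ ^ (2 * t) + a ^ 2 * Ssum a a₂ t :=
      Ssum_succ_right a a₂ t
    have hpy : a₂ ^ (2 * (t + 1)) = a₂ ^ (2 * t) * a₂ ^ 2 := by
      rw [show 2 * (t + 1) = 2 * t + 2 by ring, pow_add]
    rw [h1, h2]
    rw [hpy] at hP
    nlinarith [hP]
end
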